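/- Let G = Πₙ Gₙ be a countable product of Polish groups acting continuously on a Polish space Z, let H_{≤n} ≤ G be the subgroup of sequences that are the identity in all coordinates k ≤ n, and let (U_k) enumerate a countable basis of Z. Then the map fₙ : Z → F(G)^ω, fₙ(x) = ⟨ closure{g ∈ G : H_{≤n} g · x ∩ U_k ≠ ∅} ⟩_{k∈ω}, is a Borel homomorphism from the orbit equivalence relation E_a of G ↷ Z to the orbit equivalence relation of the right-translation action of H_{>n} on F(G)^ω, where h · ⟨C_k⟩ = ⟨C_k h^{−1}⟩ and H_{>n} is the subgroup of sequences that are the identity in all coordinates k > n. -/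

import Mathlib

/-- The Effros Borel structure on the space `F(Y)` of closed subsets of `Y`. -/
def EffrosSigma (Y : Type) [TopologicalSpace Y] :
    MeasurableSpace {C : Set Y // IsClosed C} :=
  MeasurableSpace.generateFrom
    { S | ∃ U : Set Y, IsOpen U ∧
        S = {C : {C : Set Y // IsClosed C} | ((C : Set Y) ∩ U).Nonempty} }

/-- let `G = Πₙ Gₙ` be a countable product of Polish groups acting
continuously on a Polish space `Z`, let `H_{≤n}` be the subgroup of sequences that are
the identity in all coordinates `k ≤ n`, and let `(U_k)` enumerate a countable basis of
`Z`.  Then the map `fₙ(x) = ⟨closure {g : H_{≤n} g · x ∩ U_k ≠ ∅}⟩_{k}` is a Borel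
homomorphism from the orbit equivalence relation of `G ↷ Z` to the orbit equivalence
relation of the right-translation action `h · ⟨C_k⟩ = ⟨C_k h⁻¹⟩` of `H_{>n}` (the
subgroup of sequences that are the identity in all coordinates `k > n`) on `F(G)^ω`. -/
theorem product_group_tail_homomorphism
    (G : ℕ → Type) [∀ n, Group (G n)] [∀ n, TopologicalSpace (G n)]
    [∀ n, IsTopologicalGroup (G n)] [∀ n, PolishSpace (G n)]
    (Z : Type) [TopologicalSpace Z] [PolishSpace Z] [MeasurableSpace Z] [BorelSpace Z]
    [MulAction (∀ n, G n) Z] [ContinuousSMul (∀ n, G n) Z]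
    (U : ℕ → Set Z) (hUopen : ∀ k, IsOpen (U k))
    (hUbasis : TopologicalSpace.IsTopologicalBasis (Set.range U))
    (n : ℕ) :
    ∃ f : Z → ℕ → {C : Set (∀ k, G k) // IsClosed C},
      (∀ (x : Z) (k : ℕ), (f x k : Set (∀ k, G k)) =
        closure {g : ∀ k, G k |
          ∃ h : ∀ k, G k, (∀ j, j ≤ n → h j = 1) ∧ (h * g) • x ∈ U k}) ∧
      @Measurable Z (ℕ → {C : Set (∀ k, G k) // IsClosed C}) _
        (@MeasurableSpace.pi ℕ _ fun _ => EffrosSigma (∀ k, G k)) f ∧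
      (∀ x y : Z, (∃ g : ∀ k, G k, g • x = y) →
        ∃ h : ∀ k, G k, (∀ j, n < j → h j = 1) ∧
          ∀ k, (f y k : Set (∀ k, G k)) =
            (fun c => c * h⁻¹) '' (f x k : Set (∀ k, G k))) := by
  classical
  letI mC : MeasurableSpace {C : Set (∀ k, G k) // IsClosed C} := EffrosSigma _
  set S : Z → ℕ → Set (∀ k, G k) := fun x k =>
    {g : ∀ k, G k | ∃ h : ∀ k, G k, (∀ j, j ≤ n → h j = 1) ∧ (h * g) • x ∈ U k}
    with hS
  refine ⟨fun x k => ⟨closure (S x k), isClosed_closure⟩, fun x k => rfl, ?_, ?_⟩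
  · -- measurability
    have hmk : ∀ k, Measurable (fun x => (⟨closure (S x k), isClosed_closure⟩ :
        {C : Set (∀ k, G k) // IsClosed C})) := by
      intro k
      apply measurable_generateFrom
      rintro s ⟨V, hV, rfl⟩
      have hpre : (fun x => (⟨closure (S x k), isClosed_closure⟩ :
          {C : Set (∀ k, G k) // IsClosed C})) ⁻¹' {C | ((C : Set (∀ k, G k)) ∩ V).Nonempty}
          = {x | (S x k ∩ V).Nonempty} := by
        ext x
        simp only [Set.mem_preimage, Set.mem_setOf_eq]
        constructor
        · rintro ⟨c, hc, hcV⟩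
          rcases (mem_closure_iff.1 hc) V hV hcV with ⟨d, hdV, hdS⟩
          exact ⟨d, hdS, hdV⟩
        · rintro ⟨c, hcS, hcV⟩
          exact ⟨c, subset_closure hcS, hcV⟩
      rw [hpre]
      have hopen : IsOpen {x | (S x k ∩ V).Nonempty} := by
        rw [isOpen_iff_mem_nhds]
        rintro x ⟨c, ⟨h, hh, hmem⟩, hcV⟩
        have hcont : Continuous fun y : Z => (h * c) • y := continuous_const_smul _
        refine Filter.mem_of_superset
          (((hUopen k).preimage hcont).mem_nhds hmem) ?_
        intro y hy
        exact ⟨c, ⟨h, hh, hy⟩, hcV⟩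
      exact hopen.measurableSet
    exact measurable_pi_lambda _ hmk
  · -- homomorphism
    rintro x y ⟨g, rfl⟩
    set h : ∀ k, G k := fun j => if j ≤ n then g j else 1 with hh
    refine ⟨h, fun j hj => by simp [hh, Nat.not_le.2 hj], fun k => ?_⟩
    have key : S (g • x) k = (fun c => c * h⁻¹) '' S x k := by
      ext c
      simp only [Set.mem_image, Set.mem_setOf_eq, hS]
      constructor
      · rintro ⟨e, he, hmem⟩
        refine ⟨c * h, ⟨e * c * g * h⁻¹ * c⁻¹, ?_, ?_⟩, by group⟩
        · intro j hj
          have hgj : h j = g j := by simp [hh, hj]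
          simp only [Pi.mul_apply, Pi.inv_apply, he j hj, hgj]
          group
        · have h1 : e * c * g * h⁻¹ * c⁻¹ * (c * h) = e * c * g := by group
          rw [h1, ← smul_smul]
          exact hmem
      · rintro ⟨d, ⟨e, he, hmem⟩, rfl⟩
        refine ⟨e * d * g⁻¹ * h * d⁻¹, ?_, ?_⟩
        · intro j hj
          have hgj : h j = g j := by simp [hh, hj]
          simp only [Pi.mul_apply, Pi.inv_apply, he j hj, hgj]
          group
        · rw [smul_smul]
          have h1 : e * d * g⁻¹ * h * d⁻¹ * (d * h⁻¹) * g = e * d := by group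
          rw [h1]
          exact hmem
    show closure (S (g • x) k) = (fun c => c * h⁻¹) '' closure (S x k)
    rw [key]
    exact ((Homeomorph.mulRight h⁻¹).image_closure (S x k)).symm
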